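/- For every k ∈ ℕ and every m ∈ ℚ, q_k(m) = p_k(m) + p_{k-1}(m). Moreover, for every k ∈ ℕ and every positive integer m, the string-type recursions hold: (k+1)·p_{k+1}(m) = (m−k−1)·p_k(m) + Σ_{j=1}^{m−1} 2j·p_k(j), and (k+1)·q_{k+1}(m) = (m−k)·q_k(m) + Σ_{j=1}^{m−1} 2j·q_k(j). -/

import Mathlib

/-- Generalized binomial coefficient `binom(x,k) = x(x-1)⋯(x-k+1)/k!`. -/
def qbinom (x : ℚ) (k : ℕ) : ℚ := (∏ i ∈ Finset.range k, (x - i)) / (Nat.factorial k)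

/-- `p_k(m) = binom(m-1,k)·binom(m+k,k)`. -/
def pPoly (k : ℕ) (m : ℚ) : ℚ := qbinom (m - 1) k * qbinom (m + k) k

/-- `q_k(m) = binom(m,k)·binom(m+k-1,k)`. -/
def qPoly (k : ℕ) (m : ℚ) : ℚ := qbinom m k * qbinom (m + k - 1) k

/-- `q_k = p_k + p_{k-1}` (with `p_{-1} := 0`), together with the string-type
recursions for `p_k` and `q_k` at positive integer values. -/
def Ap (k : ℕ) (m : ℚ) : ℚ := ∏ i ∈ Finset.range k, (m - i)
def Bp (k : ℕ) (m : ℚ) : ℚ := ∏ i ∈ Finset.range k, (m + 1 + i)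

lemma reflectA (k : ℕ) (m : ℚ) : (∏ i ∈ Finset.range k, (m + k - i)) = Bp k m := by
  unfold Bp
  rw [← Finset.prod_range_reflect (fun j => m + 1 + j) k]
  apply Finset.prod_congr rfl
  intro j hj
  rw [Finset.mem_range] at hj
  have h1 : (k - 1 - j) = k - (j + 1) := by omega
  have h2 : ((k - (j+1) : ℕ) : ℚ) = (k : ℚ) - (j + 1) := by
    push_cast [Nat.cast_sub (by omega : j + 1 ≤ k)]; ring
  rw [h1, h2]; ring

lemma pP (k : ℕ) (m : ℚ) :
    pPoly k m = Ap k (m - 1) * Bp k m / ((k.factorial : ℚ))^2 := by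
  unfold pPoly qbinom Ap
  rw [reflectA, div_mul_div_comm, sq]

lemma qP (k : ℕ) (m : ℚ) :
    qPoly k m = Ap k m * Bp k (m - 1) / ((k.factorial : ℚ))^2 := by
  unfold qPoly qbinom Ap
  have h : (∏ i ∈ Finset.range k, (m + k - 1 - i)) = Bp k (m - 1) := by
    rw [← reflectA k (m - 1)]
    exact Finset.prod_congr rfl fun i _ => by ring
  rw [h, div_mul_div_comm, sq]

lemma A_succ (k : ℕ) (m : ℚ) : Ap (k+1) m = Ap k m * (m - k) := by
  unfold Ap; rw [Finset.prod_range_succ]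

lemma B_succ (k : ℕ) (m : ℚ) : Bp (k+1) m = Bp k m * (m + 1 + k) := by
  unfold Bp; rw [Finset.prod_range_succ]

lemma A_succ' (k : ℕ) (m : ℚ) : Ap (k+1) m = m * Ap k (m - 1) := by
  unfold Ap
  rw [Finset.prod_range_succ']
  have h : ∀ i : ℕ, m - ((i : ℚ) + 1) = m - 1 - i := fun i => by ring
  simp only [Nat.cast_add, Nat.cast_one, Nat.cast_zero, h]
  ring

lemma B_succ' (k : ℕ) (m : ℚ) : Bp (k+1) m = (m + 1) * Bp k (m + 1) := by
  unfold Bp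
  rw [Finset.prod_range_succ']
  have h : ∀ i : ℕ, m + 1 + ((i : ℚ) + 1) = m + 1 + 1 + i := fun i => by ring
  simp only [Nat.cast_add, Nat.cast_one, Nat.cast_zero, h]
  ring

lemma core_g (k : ℕ) (m : ℚ) :
    (m - k) * (m + 1) * (Ap k m * Bp k (m + 1)) =
      m * (m + k + 1) * (Ap k (m - 1) * Bp k m) := by
  have h1 : Ap (k+1) m * Bp (k+1) m = ((m - k) * Ap k m) * ((m+1) * Bp k (m+1)) := by
    rw [A_succ, B_succ']; ring
  have h2 : Ap (k+1) m * Bp (k+1) m = (m * Ap k (m-1)) * ((m + 1 + k) * Bp k m) := by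
    rw [A_succ', B_succ]; ring
  linear_combination h1.symm.trans h2

lemma core_h (k : ℕ) (m : ℚ) :
    m * (m - k + 1) * (Ap k (m + 1) * Bp k m) =
      (m + 1) * (m + k) * (Ap k m * Bp k (m - 1)) := by
  have h1 : Ap (k+1) (m+1) * Bp (k+1) (m-1) =
      ((m + 1 - k) * Ap k (m+1)) * (m * Bp k m) := by
    rw [A_succ, B_succ']
    have : m - 1 + 1 = m := by ring
    rw [this]; ring
  have h2 : Ap (k+1) (m+1) * Bp (k+1) (m-1) =
      ((m+1) * Ap k m) * ((m + k) * Bp k (m-1)) := by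
    rw [A_succ']
    have : m + 1 - 1 = m := by ring
    rw [this, B_succ]; ring
  linear_combination h1.symm.trans h2

lemma fact_ne (k : ℕ) : ((k.factorial : ℚ)) ≠ 0 := by
  exact_mod_cast k.factorial_ne_zero


lemma step_p (k : ℕ) (m : ℚ) :
    ((k:ℚ)+1) * pPoly (k+1) (m+1) =
      ((k:ℚ)+1) * pPoly (k+1) m + (m - k) * pPoly k (m+1) + (m + k + 1) * pPoly k m := by
  rw [pP (k+1) (m+1), pP (k+1) m, pP k (m+1), pP k m]
  have e1 : m + 1 - 1 = m := by ring
  rw [e1, A_succ, B_succ, A_succ, B_succ, Nat.factorial_succ]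
  push_cast
  have hf := fact_ne k
  have hk : ((k:ℚ) + 1) ≠ 0 := by positivity
  field_simp
  linear_combination core_g k m

lemma step_q (k : ℕ) (m : ℚ) :
    ((k:ℚ)+1) * qPoly (k+1) (m+1) =
      ((k:ℚ)+1) * qPoly (k+1) m + (m + 1 - k) * qPoly k (m+1) + (m + k) * qPoly k m := by
  rw [qP (k+1) (m+1), qP (k+1) m, qP k (m+1), qP k m]
  have e1 : m + 1 - 1 = m := by ring
  rw [e1, A_succ, B_succ, A_succ, B_succ, Nat.factorial_succ]
  push_cast
  have hf := fact_ne k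
  have hk : ((k:ℚ) + 1) ≠ 0 := by positivity
  field_simp
  linear_combination core_h k m

lemma part1 (k : ℕ) (m : ℚ) :
    qPoly k m = pPoly k m + (if k = 0 then 0 else pPoly (k - 1) m) := by
  cases k with
  | zero => simp [qPoly, pPoly, qbinom]
  | succ n =>
    simp only [if_neg (Nat.succ_ne_zero n), Nat.succ_sub_one]
    rw [qP, pP, pP]
    rw [A_succ' n m, B_succ' n (m-1)]
    have e : m - 1 + 1 = m := by ring
    rw [e, A_succ n (m-1), B_succ n m, Nat.factorial_succ]
    push_cast
    have hf := fact_ne n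
    have hk : ((n:ℚ) + 1) ≠ 0 := by positivity
    field_simp
    ring

lemma p_one_zero (k : ℕ) : pPoly (k+1) (1:ℚ) = 0 := by
  rw [pP]
  have e : (1:ℚ) - 1 = 0 := by norm_num
  rw [e, A_succ']
  simp

lemma base_p (k : ℕ) : ((k:ℚ)+1) * pPoly (k+1) 1 = ((1:ℚ) - k - 1) * pPoly k 1 := by
  cases k with
  | zero => rw [p_one_zero 0]; norm_num
  | succ n => rw [p_one_zero (n+1), p_one_zero n]; ring

lemma base_q (k : ℕ) : ((k:ℚ)+1) * qPoly (k+1) 1 = ((1:ℚ) - k) * qPoly k 1 := by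
  rw [qP (k+1) 1, qP k 1]
  have e : (1:ℚ) - 1 = 0 := by norm_num
  rw [e, A_succ, B_succ, Nat.factorial_succ]
  push_cast
  have hf := fact_ne k
  have hk : ((k:ℚ) + 1) ≠ 0 := by positivity
  field_simp
  ring

theorem stmt0 :
    (∀ (k : ℕ) (m : ℚ),
      qPoly k m = pPoly k m + (if k = 0 then 0 else pPoly (k - 1) m)) ∧
    (∀ (k m : ℕ), 1 ≤ m →
      (k + 1 : ℚ) * pPoly (k + 1) (m : ℚ) =
        ((m : ℚ) - k - 1) * pPoly k (m : ℚ) +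
          ∑ j ∈ Finset.Ico 1 m, (2 * j : ℚ) * pPoly k (j : ℚ)) ∧
    (∀ (k m : ℕ), 1 ≤ m →
      (k + 1 : ℚ) * qPoly (k + 1) (m : ℚ) =
        ((m : ℚ) - k) * qPoly k (m : ℚ) +
          ∑ j ∈ Finset.Ico 1 m, (2 * j : ℚ) * qPoly k (j : ℚ)) := by
  refine ⟨part1, ?_, ?_⟩
  · intro k m hm
    induction m, hm using Nat.le_induction with
    | base =>
      rw [Finset.Ico_self, Finset.sum_empty]
      push_cast
      linear_combination base_p k
    | succ n hn ih =>
      rw [Finset.sum_Ico_succ_top hn]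
      push_cast at ih ⊢
      linear_combination step_p k (n:ℚ) + ih
  · intro k m hm
    induction m, hm using Nat.le_induction with
    | base =>
      rw [Finset.Ico_self, Finset.sum_empty]
      push_cast
      linear_combination base_q k
    | succ n hn ih =>
      rw [Finset.sum_Ico_succ_top hn]
      push_cast at ih ⊢
      linear_combination step_q k (n:ℚ) + ih
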